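/- Let m ≡ 1 or 2 (mod 4) and let S = ℂl_m = Cl_m ⊗ ℂ carry the Cl_{2m}-module structure ρ(x)s = xs, ρ(x̃)s = i·α(s)·x for x ∈ ℝᵐ (ℝ^{2m} = ℝᵐ ⊕ ℝ̃ᵐ orthogonal). Then the real bilinear form h = Re⟨c·, ·⟩_ℂ, where ⟨·,·⟩_ℂ is the complex bilinear extension of the standard scalar product on Λℝᵐ ≅ Cl_m and c is complex conjugation, is a symmetric positive-definite form for which both ρ(x) and ρ(x̃) are skew-symmetric for all x ∈ ℝᵐ; hence h is Pin(2m)-invariant. -/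

import Mathlib

open scoped RealInnerProductSpace TensorProduct

/-- The quadratic form `x ↦ −⟨x,x⟩` of a Euclidean space, whose Clifford
algebra is `Cl_m` (relation `x² = −|x|²`). -/
noncomputable def negInnerQF (V : Type*) [NormedAddCommGroup V]
    [InnerProductSpace ℝ V] : QuadraticForm ℝ V :=
  -(LinearMap.BilinMap.toQuadraticMap (innerₗ (F := V)))

/-- The ordered monomial `e_{i₁}⋯e_{i_k}` in the Clifford algebra. -/
noncomputable def cliffMonomial {V : Type*} [NormedAddCommGroup V]
    [InnerProductSpace ℝ V] {m : ℕ} (b : Fin m → V) (s : Finset (Fin m)) :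
    CliffordAlgebra (negInnerQF V) :=
  ((s.sort (· ≤ ·)).map fun i => CliffordAlgebra.ι (negInnerQF V) (b i)).prod

/-!
STATEMENT 15: Let `m ≡ 1` or `2 (mod 4)` and let `S = ℂl_m = Cl_m ⊗ ℂ`
carry the `Cl_{2m}`-module structure `ρ(x)s = xs`, `ρ(x̃)s = i·α(s)·x` for
`x ∈ ℝᵐ` (`ℝ^{2m} = ℝᵐ ⊕ ℝ̃ᵐ` orthogonal).  Then the real bilinear form
`h = Re⟨c·,·⟩_ℂ` — where `⟨·,·⟩_ℂ` is the complex bilinear extension of the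
standard scalar product on `Λℝᵐ ≅ Cl_m` and `c` is complex conjugation — is
symmetric and positive definite, and both `ρ(x)` and `ρ(x̃)` are
`h`-skew-symmetric for all `x ∈ ℝᵐ`; hence `h` is `Pin(2m)`-invariant.
-/

namespace Aux15
variable {V : Type*} [NormedAddCommGroup V] [InnerProductSpace ℝ V] {m : ℕ}

lemma negInnerQF_apply (x : V) : negInnerQF V x = -⟪x, x⟫ := by
  simp [negInnerQF, LinearMap.BilinMap.toQuadraticMap_apply, innerₗ_apply_apply]

lemma isOrtho_of_inner {x y : V} (h : ⟪x, y⟫ = 0) : (negInnerQF V).IsOrtho x y := by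
  rw [QuadraticMap.isOrtho_def]
  simp only [negInnerQF_apply]
  rw [inner_add_add_self, real_inner_comm y x] at *
  rw [h]; ring

noncomputable def P (b : Fin m → V) (l : List (Fin m)) : CliffordAlgebra (negInnerQF V) :=
  (l.map fun i => CliffordAlgebra.ι (negInnerQF V) (b i)).prod

@[simp] lemma P_nil (b : Fin m → V) : P b [] = 1 := rfl

@[simp] lemma P_cons (b : Fin m → V) (j : Fin m) (l : List (Fin m)) :
    P b (j :: l) = CliffordAlgebra.ι (negInnerQF V) (b j) * P b l := by
  simp [P]

def ins (i : Fin m) : List (Fin m) → List (Fin m)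
  | [] => [i]
  | j :: t => if i < j then i :: j :: t else if i = j then t else j :: ins i t

lemma mem_ins {i k : Fin m} : ∀ {l : List (Fin m)}, k ∈ ins i l → k = i ∨ k ∈ l
  | [], h => by simpa [ins] using h
  | j :: t, h => by
    rw [ins] at h
    split_ifs at h with h1 h2
    · simpa using h
    · simp [h]
    · rcases List.mem_cons.1 h with h | h
      · simp [h]
      · rcases mem_ins h with h | h <;> simp [h]

lemma ins_of_lt {i : Fin m} : ∀ {l : List (Fin m)}, (∀ k ∈ l, i < k) → ins i l = i :: l
  | [], _ => rfl
  | j :: t, h => by simp [ins, h j (by simp)]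

lemma sorted_ins {i : Fin m} : ∀ {l : List (Fin m)}, l.Pairwise (· < ·) →
    (ins i l).Pairwise (· < ·)
  | [], _ => by simp [ins]
  | j :: t, h => by
    rw [List.pairwise_cons] at h
    rw [ins]
    split_ifs with h1 h2
    · refine List.pairwise_cons.2 ⟨?_, List.pairwise_cons.2 h⟩
      intro k hk
      rcases List.mem_cons.1 hk with rfl | hk
      · exact h1
      · exact h1.trans (h.1 k hk)
    · exact h.2
    · refine List.pairwise_cons.2 ⟨?_, sorted_ins h.2⟩
      intro k hk
      rcases mem_ins hk with rfl | hk
      · exact lt_of_le_of_ne (not_lt.1 h1) (Ne.symm h2)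
      · exact h.1 k hk

lemma ins_ins {i : Fin m} : ∀ {l : List (Fin m)}, l.Pairwise (· < ·) →
    ins i (ins i l) = l
  | [], _ => by simp [ins]
  | j :: t, h => by
    rw [List.pairwise_cons] at h
    rw [ins]
    split_ifs with h1 h2
    · simp [ins, h1]
    · subst h2
      exact ins_of_lt h.1
    · rw [ins, if_neg h1, if_neg h2, ins_ins h.2]

lemma ins_cons_comm {i j : Fin m} {t : List (Fin m)} (h : (j :: t).Pairwise (· < ·)) :
    ins i (j :: t) = ins j (ins i t) := by
  rw [List.pairwise_cons] at h
  rw [ins]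
  split_ifs with h1 h2
  · rw [ins_of_lt fun k hk => h1.trans (h.1 k hk), ins, if_neg (asymm h1),
      if_neg (Ne.symm (ne_of_lt h1)), ins_of_lt h.1]
  · subst h2
    rw [ins_of_lt h.1, ins, if_neg (lt_irrefl _), if_pos rfl]
  · rw [ins_of_lt fun k hk => (mem_ins hk).elim
      (fun e => e ▸ lt_of_le_of_ne (not_lt.1 h1) (Ne.symm h2))
      (fun hk => h.1 k hk)]

variable {b : Fin m → V}

lemma inner_bb (hb : Orthonormal ℝ b) (i j : Fin m) :
    ⟪b i, b j⟫ = if i = j then 1 else 0 := orthonormal_iff_ite.mp hb i j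

lemma mulL (hb : Orthonormal ℝ b) (i : Fin m) :
    ∀ {l : List (Fin m)}, l.Pairwise (· < ·) →
    ∃ ε : ℝ, (ε = 1 ∨ ε = -1) ∧
      CliffordAlgebra.ι (negInnerQF V) (b i) * P b l = ε • P b (ins i l)
  | [], _ => ⟨1, Or.inl rfl, by simp [ins]⟩
  | j :: t, h => by
    rw [List.pairwise_cons] at h
    rw [ins]
    split_ifs with h1 h2
    · exact ⟨1, Or.inl rfl, by simp⟩
    · subst h2
      refine ⟨-1, Or.inr rfl, ?_⟩
      rw [P_cons, ← mul_assoc, CliffordAlgebra.ι_sq_scalar, negInnerQF_apply,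
        inner_bb hb, if_pos rfl, Algebra.algebraMap_eq_smul_one, smul_mul_assoc, one_mul]
    · obtain ⟨ε, hε, he⟩ := mulL hb i h.2
      refine ⟨-ε, by rcases hε with rfl | rfl <;> norm_num, ?_⟩
      rw [P_cons, ← mul_assoc,
        CliffordAlgebra.ι_mul_ι_comm_of_isOrtho
          (isOrtho_of_inner (by rw [inner_bb hb, if_neg h2])),
        neg_mul, mul_assoc, he, P_cons, mul_smul_comm, neg_smul]

lemma mulR (hb : Orthonormal ℝ b) (i : Fin m) :
    ∀ {l : List (Fin m)}, l.Pairwise (· < ·) →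
    ∃ ε : ℝ, (ε = 1 ∨ ε = -1) ∧
      P b l * CliffordAlgebra.ι (negInnerQF V) (b i) = ε • P b (ins i l)
  | [], _ => ⟨1, Or.inl rfl, by simp [ins]⟩
  | j :: t, h => by
    obtain ⟨ε, hε, he⟩ := mulR hb i (List.pairwise_cons.1 h).2
    obtain ⟨ε', hε', he'⟩ := mulL hb j (l := ins i t) (sorted_ins (List.pairwise_cons.1 h).2)
    refine ⟨ε' * ε, by rcases hε with rfl | rfl <;> rcases hε' with rfl | rfl <;> norm_num, ?_⟩
    rw [ins_cons_comm h, P_cons, mul_assoc, he, mul_smul_comm, he', smul_smul, mul_comm ε]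

lemma involute_P (b : Fin m → V) :
    ∀ l : List (Fin m), CliffordAlgebra.involute (P b l) = ((-1 : ℝ) ^ l.length) • P b l
  | [] => by simp
  | j :: l => by
    rw [P_cons, map_mul, CliffordAlgebra.involute_ι, involute_P b l]
    simp [pow_succ, mul_smul_comm, smul_smul, mul_comm]

lemma cliffMonomial_eq_P (s : Finset (Fin m)) :
    cliffMonomial b s = P b (s.sort (· ≤ ·)) := rfl

lemma P_eq_cliffMonomial {l : List (Fin m)} (h : l.Pairwise (· < ·)) :
    P b l = cliffMonomial b l.toFinset := by
  rw [cliffMonomial_eq_P]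
  congr 1
  exact ((List.toFinset_sort (· ≤ ·) (h.imp ne_of_lt)).mpr (h.imp le_of_lt)).symm

noncomputable def insF (i : Fin m) (s : Finset (Fin m)) : Finset (Fin m) :=
  (ins i (s.sort (· ≤ ·))).toFinset

lemma sort_insF (i : Fin m) (s : Finset (Fin m)) :
    (insF i s).sort (· ≤ ·) = ins i (s.sort (· ≤ ·)) := by
  have h := sorted_ins (i := i) (s.sortedLT_sort.pairwise)
  exact (List.toFinset_sort (· ≤ ·) (h.imp ne_of_lt)).mpr (h.imp le_of_lt)

lemma insF_insF (i : Fin m) (s : Finset (Fin m)) : insF i (insF i s) = s := by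
  rw [insF, sort_insF, ins_ins s.sortedLT_sort.pairwise, Finset.sort_toFinset]

lemma mulL_mono (hb : Orthonormal ℝ b) (i : Fin m) (s : Finset (Fin m)) :
    ∃ ε : ℝ, (ε = 1 ∨ ε = -1) ∧
      CliffordAlgebra.ι (negInnerQF V) (b i) * cliffMonomial b s
        = ε • cliffMonomial b (insF i s) := by
  obtain ⟨ε, hε, he⟩ := mulL hb i s.sortedLT_sort.pairwise
  exact ⟨ε, hε, by
    rw [cliffMonomial_eq_P, he, P_eq_cliffMonomial (sorted_ins s.sortedLT_sort.pairwise)]; rfl⟩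

lemma mulR_mono (hb : Orthonormal ℝ b) (i : Fin m) (s : Finset (Fin m)) :
    ∃ ε : ℝ, (ε = 1 ∨ ε = -1) ∧
      cliffMonomial b s * CliffordAlgebra.ι (negInnerQF V) (b i)
        = ε • cliffMonomial b (insF i s) := by
  obtain ⟨ε, hε, he⟩ := mulR hb i s.sortedLT_sort.pairwise
  exact ⟨ε, hε, by
    rw [cliffMonomial_eq_P, he, P_eq_cliffMonomial (sorted_ins s.sortedLT_sort.pairwise)]; rfl⟩

lemma involute_mono (s : Finset (Fin m)) :
    CliffordAlgebra.involute (cliffMonomial b s)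
      = ((-1 : ℝ) ^ s.card) • cliffMonomial b s := by
  rw [cliffMonomial_eq_P, involute_P, Finset.length_sort]

lemma ι_sq (hb : Orthonormal ℝ b) (i : Fin m) :
    CliffordAlgebra.ι (negInnerQF V) (b i) * CliffordAlgebra.ι (negInnerQF V) (b i)
      = algebraMap ℝ _ (-1) := by
  rw [CliffordAlgebra.ι_sq_scalar, negInnerQF_apply, inner_bb hb, if_pos rfl]

section g
variable (g : LinearMap.BilinForm ℝ (CliffordAlgebra (negInnerQF V)))
variable (hg : ∀ s t : Finset (Fin m),
      g (cliffMonomial b s) (cliffMonomial b t) = if s = t then 1 else 0)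

include hg

lemma mono_ne_zero (s : Finset (Fin m)) : cliffMonomial b s ≠ 0 := by
  intro h
  have := hg s s
  rw [h] at this
  simp at this

lemma skewL_mono (hb : Orthonormal ℝ b) (i : Fin m) (s t : Finset (Fin m)) :
    g (CliffordAlgebra.ι (negInnerQF V) (b i) * cliffMonomial b s) (cliffMonomial b t)
      = - g (cliffMonomial b s) (CliffordAlgebra.ι (negInnerQF V) (b i) * cliffMonomial b t) := by
  obtain ⟨ε, hε, he⟩ := mulL_mono hb i s
  obtain ⟨ε', hε', he'⟩ := mulL_mono hb i t
  rw [he, he', map_smul, map_smul, LinearMap.smul_apply, hg, hg, smul_eq_mul, smul_eq_mul]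
  by_cases hst : insF i s = t
  · have hts : insF i t = s := by rw [← hst, insF_insF]
    rw [if_pos hst, if_pos hts.symm]
    have key : CliffordAlgebra.ι (negInnerQF V) (b i) *
        (CliffordAlgebra.ι (negInnerQF V) (b i) * cliffMonomial b s) = - cliffMonomial b s := by
      rw [← mul_assoc, ι_sq hb, Algebra.algebraMap_eq_smul_one]
      simp
    rw [he, hst] at key
    rw [mul_smul_comm, he', hts] at key
    have h2 : (ε * ε') • cliffMonomial b s = (-1 : ℝ) • cliffMonomial b s := by
      rw [mul_smul]; simpa using key
    have h3 : ε * ε' = -1 := by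
      by_contra hne
      exact (sub_ne_zero.mpr hne) (by
        have := sub_eq_zero.mpr h2
        rw [← sub_smul] at this
        rcases smul_eq_zero.mp this with h | h
        · exact h
        · exact absurd h (mono_ne_zero g hg s))
      |>.elim
    rcases hε with rfl | rfl <;> rcases hε' with rfl | rfl <;> (norm_num at h3) <;> norm_num
  · have hts : insF i t ≠ s := fun h => hst (by rw [← h, insF_insF])
    rw [if_neg hst, if_neg (fun h => hts h.symm)]
    ring

lemma skewR_mono (hb : Orthonormal ℝ b) (i : Fin m) (s t : Finset (Fin m)) :
    g (cliffMonomial b s * CliffordAlgebra.ι (negInnerQF V) (b i)) (cliffMonomial b t)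
      = - g (cliffMonomial b s) (cliffMonomial b t * CliffordAlgebra.ι (negInnerQF V) (b i)) := by
  obtain ⟨ε, hε, he⟩ := mulR_mono hb i s
  obtain ⟨ε', hε', he'⟩ := mulR_mono hb i t
  rw [he, he', map_smul, map_smul, LinearMap.smul_apply, hg, hg, smul_eq_mul, smul_eq_mul]
  by_cases hst : insF i s = t
  · have hts : insF i t = s := by rw [← hst, insF_insF]
    rw [if_pos hst, if_pos hts.symm]
    have key : cliffMonomial b s * CliffordAlgebra.ι (negInnerQF V) (b i) *
        CliffordAlgebra.ι (negInnerQF V) (b i) = - cliffMonomial b s := by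
      rw [mul_assoc, ι_sq hb, Algebra.algebraMap_eq_smul_one]
      simp
    rw [he, hst, smul_mul_assoc, he', hts] at key
    have h2 : (ε * ε') • cliffMonomial b s = (-1 : ℝ) • cliffMonomial b s := by
      rw [mul_smul]; simpa using key
    have h3 : ε * ε' = -1 := by
      by_contra hne
      exact (sub_ne_zero.mpr hne) (by
        have := sub_eq_zero.mpr h2
        rw [← sub_smul] at this
        rcases smul_eq_zero.mp this with h | h
        · exact h
        · exact absurd h (mono_ne_zero g hg s))
      |>.elim
    rcases hε with rfl | rfl <;> rcases hε' with rfl | rfl <;> (norm_num at h3) <;> norm_num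
  · have hts : insF i t ≠ s := fun h => hst (by rw [← h, insF_insF])
    rw [if_neg hst, if_neg (fun h => hts h.symm)]
    ring

lemma symm_inv_mono (s t : Finset (Fin m)) :
    g (CliffordAlgebra.involute (cliffMonomial b s)) (cliffMonomial b t)
      = g (cliffMonomial b s) (CliffordAlgebra.involute (cliffMonomial b t)) := by
  rw [involute_mono, involute_mono, map_smul, map_smul, LinearMap.smul_apply, hg]
  by_cases hst : s = t
  · subst hst; rfl
  · simp [hst]

end g

lemma cliffMonomial_empty : cliffMonomial b (∅ : Finset (Fin m)) = 1 := by
  simp [cliffMonomial]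

lemma span_mono_top (b : Module.Basis (Fin m) ℝ V) (hb : Orthonormal ℝ (⇑b)) :
    Submodule.span ℝ (Set.range (cliffMonomial (⇑b))) = ⊤ := by
  set M := Submodule.span ℝ (Set.range (cliffMonomial (⇑b))) with hM
  rw [eq_top_iff]
  rintro x -
  have hι : ∀ (v : V), ∀ y ∈ M, CliffordAlgebra.ι (negInnerQF V) v * y ∈ M := by
    intro v y hy
    have hbi : ∀ (i : Fin m), ∀ y ∈ M, CliffordAlgebra.ι (negInnerQF V) (b i) * y ∈ M := by
      intro i y hy
      induction hy using Submodule.span_induction with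
      | mem z hz =>
        obtain ⟨s, rfl⟩ := hz
        obtain ⟨ε, _, he⟩ := mulL_mono hb i s
        rw [he]
        exact M.smul_mem _ (Submodule.subset_span ⟨_, rfl⟩)
      | zero => simp
      | add a c _ _ ha hc => rw [mul_add]; exact M.add_mem ha hc
      | smul r a _ ha => rw [mul_smul_comm]; exact M.smul_mem _ ha
    have hv : CliffordAlgebra.ι (negInnerQF V) v
        = ∑ i, b.repr v i • CliffordAlgebra.ι (negInnerQF V) (b i) := by
      conv_lhs => rw [← Module.Basis.sum_repr b v]
      rw [map_sum]
      simp
    rw [hv, Finset.sum_mul]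
    exact M.sum_mem fun i _ => by
      rw [smul_mul_assoc]; exact M.smul_mem _ (hbi i y hy)
  have key : ∀ a : CliffordAlgebra (negInnerQF V), ∀ y ∈ M, a * y ∈ M := by
    intro a
    induction a using CliffordAlgebra.induction with
    | algebraMap r => intro y hy; rw [← Algebra.smul_def]; exact M.smul_mem _ hy
    | ι v => exact hι v
    | mul a c ha hc => intro y hy; rw [mul_assoc]; exact ha _ (hc _ hy)
    | add a c ha hc => intro y hy; rw [add_mul]; exact M.add_mem (ha _ hy) (hc _ hy)
  have h1 : (1 : CliffordAlgebra (negInnerQF V)) ∈ M :=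
    cliffMonomial_empty (b := ⇑b) ▸ Submodule.subset_span ⟨∅, rfl⟩
  simpa using key x 1 h1

lemma ext_bilin (b : Module.Basis (Fin m) ℝ V) (hb : Orthonormal ℝ (⇑b))
    (B1 B2 : LinearMap.BilinForm ℝ (CliffordAlgebra (negInnerQF V)))
    (h : ∀ s t, B1 (cliffMonomial (⇑b) s) (cliffMonomial (⇑b) t)
      = B2 (cliffMonomial (⇑b) s) (cliffMonomial (⇑b) t)) :
    ∀ φ ψ, B1 φ ψ = B2 φ ψ := by
  have : B1 = B2 := by
    apply LinearMap.ext_on (span_mono_top b hb)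
    rintro _ ⟨s, rfl⟩
    apply LinearMap.ext_on (span_mono_top b hb)
    rintro _ ⟨t, rfl⟩
    exact h s t
  intro φ ψ; rw [this]

section gfull
variable (bB : Module.Basis (Fin m) ℝ V) (hb : Orthonormal ℝ (⇑bB))
variable (g : LinearMap.BilinForm ℝ (CliffordAlgebra (negInnerQF V)))
variable (hg : ∀ s t : Finset (Fin m),
      g (cliffMonomial (⇑bB) s) (cliffMonomial (⇑bB) t) = if s = t then 1 else 0)
include hb hg

lemma skewL_full (x : V) (φ ψ : CliffordAlgebra (negInnerQF V)) :
    g (CliffordAlgebra.ι (negInnerQF V) x * φ) ψ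
      = - g φ (CliffordAlgebra.ι (negInnerQF V) x * ψ) := by
  have hbi : ∀ (i : Fin m) (φ ψ : CliffordAlgebra (negInnerQF V)),
      g (CliffordAlgebra.ι (negInnerQF V) (bB i) * φ) ψ
        = - g φ (CliffordAlgebra.ι (negInnerQF V) (bB i) * ψ) := by
    intro i φ ψ
    have := ext_bilin bB hb
      (g.compl₁₂ (LinearMap.mulLeft ℝ (CliffordAlgebra.ι (negInnerQF V) (bB i))) LinearMap.id)
      (-(g.compl₁₂ LinearMap.id (LinearMap.mulLeft ℝ (CliffordAlgebra.ι (negInnerQF V) (bB i)))))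
      (fun s t => by
        simpa [LinearMap.compl₁₂_apply, LinearMap.mulLeft_apply] using skewL_mono g hg hb i s t)
      φ ψ
    simpa [LinearMap.compl₁₂_apply, LinearMap.mulLeft_apply] using this
  have hx : CliffordAlgebra.ι (negInnerQF V) x
      = ∑ i, bB.repr x i • CliffordAlgebra.ι (negInnerQF V) (bB i) := by
    conv_lhs => rw [← Module.Basis.sum_repr bB x]
    rw [map_sum]; simp
  rw [hx, Finset.sum_mul, Finset.sum_mul]
  simp only [smul_mul_assoc, map_sum, map_smul, LinearMap.sum_apply, LinearMap.smul_apply,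
    smul_eq_mul]
  rw [← Finset.sum_neg_distrib]
  exact Finset.sum_congr rfl fun i _ => by rw [hbi i φ ψ]; ring

lemma skewR_full (x : V) (φ ψ : CliffordAlgebra (negInnerQF V)) :
    g (φ * CliffordAlgebra.ι (negInnerQF V) x) ψ
      = - g φ (ψ * CliffordAlgebra.ι (negInnerQF V) x) := by
  have hbi : ∀ (i : Fin m) (φ ψ : CliffordAlgebra (negInnerQF V)),
      g (φ * CliffordAlgebra.ι (negInnerQF V) (bB i)) ψ
        = - g φ (ψ * CliffordAlgebra.ι (negInnerQF V) (bB i)) := by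
    intro i φ ψ
    have := ext_bilin bB hb
      (g.compl₁₂ (LinearMap.mulRight ℝ (CliffordAlgebra.ι (negInnerQF V) (bB i))) LinearMap.id)
      (-(g.compl₁₂ LinearMap.id (LinearMap.mulRight ℝ (CliffordAlgebra.ι (negInnerQF V) (bB i)))))
      (fun s t => by
        simpa [LinearMap.compl₁₂_apply, LinearMap.mulRight_apply] using skewR_mono g hg hb i s t)
      φ ψ
    simpa [LinearMap.compl₁₂_apply, LinearMap.mulRight_apply] using this
  have hx : CliffordAlgebra.ι (negInnerQF V) x
      = ∑ i, bB.repr x i • CliffordAlgebra.ι (negInnerQF V) (bB i) := by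
    conv_lhs => rw [← Module.Basis.sum_repr bB x]
    rw [map_sum]; simp
  rw [hx, Finset.mul_sum, Finset.mul_sum]
  simp only [mul_smul_comm, map_sum, map_smul, LinearMap.sum_apply, LinearMap.smul_apply,
    smul_eq_mul]
  rw [← Finset.sum_neg_distrib]
  exact Finset.sum_congr rfl fun i _ => by rw [hbi i φ ψ]; ring

lemma symm_inv_full (φ ψ : CliffordAlgebra (negInnerQF V)) :
    g (CliffordAlgebra.involute φ) ψ = g φ (CliffordAlgebra.involute ψ) := by
  have := ext_bilin bB hb
    (g.compl₁₂ (CliffordAlgebra.involute (Q := negInnerQF V)).toLinearMap LinearMap.id)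
    (g.compl₁₂ LinearMap.id (CliffordAlgebra.involute (Q := negInnerQF V)).toLinearMap)
    (fun s t => by
      simpa [LinearMap.compl₁₂_apply] using symm_inv_mono g hg s t)
    φ ψ
  simpa [LinearMap.compl₁₂_apply] using this

lemma symmM_full (x : V) (φ ψ : CliffordAlgebra (negInnerQF V)) :
    g (CliffordAlgebra.involute φ * CliffordAlgebra.ι (negInnerQF V) x) ψ
      = g φ (CliffordAlgebra.involute ψ * CliffordAlgebra.ι (negInnerQF V) x) := by
  rw [skewR_full bB hb g hg, symm_inv_full bB hb g hg, map_mul, CliffordAlgebra.involute_ι,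
    mul_neg, map_neg, neg_neg]

end gfull
end Aux15

set_option maxHeartbeats 1000000

theorem complexified_clifford_invariant_scalar_product
    (V : Type*) [NormedAddCommGroup V] [InnerProductSpace ℝ V]
    (m : ℕ) (hm : m % 4 = 1 ∨ m % 4 = 2)
    (b : Module.Basis (Fin m) ℝ V) (hb : Orthonormal ℝ (⇑b))
    -- the standard scalar product on `Cl_m ≅ Λℝᵐ`
    (g : LinearMap.BilinForm ℝ (CliffordAlgebra (negInnerQF V)))
    (hgsymm : ∀ φ ψ, g φ ψ = g ψ φ)
    (hg : ∀ s t : Finset (Fin m),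
      g (cliffMonomial (⇑b) s) (cliffMonomial (⇑b) t) = if s = t then 1 else 0)
    -- its complex bilinear extension to `S = ℂ ⊗ Cl_m`
    (gC : (ℂ ⊗[ℝ] CliffordAlgebra (negInnerQF V)) →ₗ[ℂ]
      (ℂ ⊗[ℝ] CliffordAlgebra (negInnerQF V)) →ₗ[ℂ] ℂ)
    (hgC : ∀ (z w : ℂ) (φ ψ : CliffordAlgebra (negInnerQF V)),
      gC (z ⊗ₜ φ) (w ⊗ₜ ψ) = z * w * (g φ ψ : ℂ))
    -- complex conjugation `c` on `S`
    (c : (ℂ ⊗[ℝ] CliffordAlgebra (negInnerQF V)) →ₗ[ℝ]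
      (ℂ ⊗[ℝ] CliffordAlgebra (negInnerQF V)))
    (hc : ∀ (z : ℂ) (φ : CliffordAlgebra (negInnerQF V)),
      c (z ⊗ₜ φ) = (starRingEnd ℂ) z ⊗ₜ φ)
    -- the grading involution `α` extended ℂ-linearly
    (α : (ℂ ⊗[ℝ] CliffordAlgebra (negInnerQF V)) →ₗ[ℂ]
      (ℂ ⊗[ℝ] CliffordAlgebra (negInnerQF V)))
    (hα : ∀ (z : ℂ) (φ : CliffordAlgebra (negInnerQF V)),
      α (z ⊗ₜ φ) = z ⊗ₜ CliffordAlgebra.involute φ)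
    -- the real form `h = Re⟨c·,·⟩_ℂ`
    (h : (ℂ ⊗[ℝ] CliffordAlgebra (negInnerQF V)) →
      (ℂ ⊗[ℝ] CliffordAlgebra (negInnerQF V)) → ℝ)
    (hh : ∀ s t, h s t = (gC (c s) t).re) :
    -- `h` is symmetric …
    (∀ s t, h s t = h t s) ∧
    -- … positive definite …
    (∀ s, s ≠ 0 → 0 < h s s) ∧
    -- … `ρ(x) : s ↦ (1 ⊗ x)·s` is `h`-skew-symmetric …
    (∀ (x : V) (s t),
      h (((1 : ℂ) ⊗ₜ CliffordAlgebra.ι (negInnerQF V) x) * s) t =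
        - h s (((1 : ℂ) ⊗ₜ CliffordAlgebra.ι (negInnerQF V) x) * t)) ∧
    -- … and `ρ(x̃) : s ↦ i·α(s)·(1 ⊗ x)` is `h`-skew-symmetric
    (∀ (x : V) (s t),
      h (Complex.I • (α s * ((1 : ℂ) ⊗ₜ CliffordAlgebra.ι (negInnerQF V) x))) t =
        - h s (Complex.I • (α t * ((1 : ℂ) ⊗ₜ CliffordAlgebra.ι (negInnerQF V) x)))) := by
  classical
  -- complex-level commutation lemmas
  have c_mulR : ∀ (x : V) (u : ℂ ⊗[ℝ] CliffordAlgebra (negInnerQF V)),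
      c (u * ((1 : ℂ) ⊗ₜ CliffordAlgebra.ι (negInnerQF V) x))
        = c u * ((1 : ℂ) ⊗ₜ CliffordAlgebra.ι (negInnerQF V) x) := by
    intro x u
    induction u using TensorProduct.induction_on with
    | zero => simp only [zero_mul, map_zero]
    | tmul z φ => simp [Algebra.TensorProduct.tmul_mul_tmul, hc]
    | add u v hu hv => rw [add_mul, map_add, hu, hv, map_add, add_mul]
  have c_mulL : ∀ (x : V) (u : ℂ ⊗[ℝ] CliffordAlgebra (negInnerQF V)),
      c (((1 : ℂ) ⊗ₜ CliffordAlgebra.ι (negInnerQF V) x) * u)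
        = ((1 : ℂ) ⊗ₜ CliffordAlgebra.ι (negInnerQF V) x) * c u := by
    intro x u
    induction u using TensorProduct.induction_on with
    | zero => simp only [mul_zero, map_zero]
    | tmul z φ => simp [Algebra.TensorProduct.tmul_mul_tmul, hc]
    | add u v hu hv => rw [mul_add, map_add, hu, hv, map_add, mul_add]
  have c_alpha : ∀ u, c (α u) = α (c u) := by
    intro u
    induction u using TensorProduct.induction_on with
    | zero => simp only [map_zero]
    | tmul z φ => rw [hα, hc, hc, hα]
    | add u v hu hv => rw [map_add, map_add, hu, hv, map_add, map_add]
  have c_smulI : ∀ u, c (Complex.I • u) = -(Complex.I • c u) := by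
    intro u
    induction u using TensorProduct.induction_on with
    | zero => simp only [smul_zero, map_zero, neg_zero]
    | tmul z φ =>
      rw [TensorProduct.smul_tmul', hc, hc, TensorProduct.smul_tmul', ← TensorProduct.neg_tmul]
      congr 1
      simp [smul_eq_mul]
    | add u v hu hv => rw [smul_add, map_add, hu, hv, map_add, smul_add, neg_add]
  -- gC-level skew/symmetry
  have gC_skewL : ∀ (x : V) (u v : ℂ ⊗[ℝ] CliffordAlgebra (negInnerQF V)),
      gC (((1 : ℂ) ⊗ₜ CliffordAlgebra.ι (negInnerQF V) x) * u) v
        = - gC u (((1 : ℂ) ⊗ₜ CliffordAlgebra.ι (negInnerQF V) x) * v) := by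
    intro x u v
    induction u using TensorProduct.induction_on with
    | zero => simp only [mul_zero, zero_mul, map_zero, LinearMap.zero_apply, neg_zero]
    | tmul z φ =>
      induction v using TensorProduct.induction_on with
      | zero => simp only [mul_zero, map_zero, neg_zero]
      | tmul w ψ =>
        simp only [Algebra.TensorProduct.tmul_mul_tmul, one_mul, mul_one, hgC]
        rw [Aux15.skewL_full b hb g hg x φ ψ]
        push_cast
        ring
      | add v1 v2 h1 h2 =>
        rw [mul_add, map_add, h1, h2, map_add, neg_add]
    | add u1 u2 h1 h2 =>
      rw [mul_add, map_add, LinearMap.add_apply, h1, h2, map_add, LinearMap.add_apply, neg_add]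
  have gC_symmM : ∀ (x : V) (u v : ℂ ⊗[ℝ] CliffordAlgebra (negInnerQF V)),
      gC (α u * ((1 : ℂ) ⊗ₜ CliffordAlgebra.ι (negInnerQF V) x)) v
        = gC u (α v * ((1 : ℂ) ⊗ₜ CliffordAlgebra.ι (negInnerQF V) x)) := by
    intro x u v
    induction u using TensorProduct.induction_on with
    | zero => simp only [map_zero, zero_mul, LinearMap.zero_apply]
    | tmul z φ =>
      induction v using TensorProduct.induction_on with
      | zero => simp only [map_zero, zero_mul]
      | tmul w ψ =>
        rw [hα, hα]
        simp only [Algebra.TensorProduct.tmul_mul_tmul, one_mul, mul_one, hgC]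
        rw [Aux15.symmM_full b hb g hg x φ ψ]
      | add v1 v2 h1 h2 =>
        rw [map_add (gC _), h1, h2, map_add α, add_mul, map_add (gC _)]
    | add u1 u2 h1 h2 =>
      rw [map_add, add_mul, map_add, LinearMap.add_apply, h1, h2, map_add, LinearMap.add_apply]
  refine ⟨?_, ?_, ?_, ?_⟩
  · -- symmetry
    intro s t
    rw [hh, hh]
    induction s using TensorProduct.induction_on with
    | zero => simp only [map_zero, LinearMap.zero_apply, Complex.zero_re]
    | tmul z φ =>
      induction t using TensorProduct.induction_on with
      | zero => simp only [map_zero, LinearMap.zero_apply, Complex.zero_re]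
      | tmul w ψ =>
        rw [hc, hc, hgC, hgC, hgsymm ψ φ]
        simp only [Complex.mul_re, Complex.mul_im, Complex.conj_re, Complex.conj_im,
          Complex.ofReal_re, Complex.ofReal_im]
        ring
      | add t1 t2 h1 h2 =>
        simp only [map_add, LinearMap.add_apply, Complex.add_re, h1, h2]
    | add s1 s2 h1 h2 =>
      simp only [map_add, LinearMap.add_apply, Complex.add_re, h1, h2]
  · -- positive definiteness
    intro s hs
    have hsC : ∀ u : ℂ ⊗[ℝ] CliffordAlgebra (negInnerQF V), u ∈ Submodule.span ℂ
        (Set.range fun t : Finset (Fin m) =>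
          ((1 : ℂ) ⊗ₜ[ℝ] cliffMonomial (⇑b) t : ℂ ⊗[ℝ] CliffordAlgebra (negInnerQF V))) := by
      intro u
      induction u using TensorProduct.induction_on with
      | zero => exact Submodule.zero_mem _
      | tmul z φ =>
        have hφ : φ ∈ Submodule.span ℝ (Set.range (cliffMonomial (⇑b))) := by
          rw [Aux15.span_mono_top b hb]; trivial
        induction hφ using Submodule.span_induction with
        | mem y hy =>
          obtain ⟨t, rfl⟩ := hy
          have : (z ⊗ₜ[ℝ] cliffMonomial (⇑b) t : ℂ ⊗[ℝ] CliffordAlgebra (negInnerQF V))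
              = z • ((1 : ℂ) ⊗ₜ[ℝ] cliffMonomial (⇑b) t) := by
            rw [TensorProduct.smul_tmul', smul_eq_mul, mul_one]
          rw [this]
          exact Submodule.smul_mem _ _ (Submodule.subset_span ⟨t, rfl⟩)
        | zero => rw [TensorProduct.tmul_zero]; exact Submodule.zero_mem _
        | add a a' _ _ ha ha' => rw [TensorProduct.tmul_add]; exact Submodule.add_mem _ ha ha'
        | smul r a _ ha =>
          rw [TensorProduct.tmul_smul, ← algebraMap_smul ℂ r]
          exact Submodule.smul_mem _ _ ha
      | add u v hu hv => exact Submodule.add_mem _ hu hv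
    obtain ⟨z, hz⟩ := (Submodule.mem_span_range_iff_exists_fun ℂ).mp (hsC s)
    have hval : ∀ t t' : Finset (Fin m),
        gC ((1 : ℂ) ⊗ₜ[ℝ] cliffMonomial (⇑b) t) ((1 : ℂ) ⊗ₜ[ℝ] cliffMonomial (⇑b) t')
          = if t = t' then 1 else 0 := by
      intro t t'
      rw [hgC, hg]
      split_ifs <;> simp
    have hcs : c s = ∑ t, (starRingEnd ℂ) (z t) • ((1 : ℂ) ⊗ₜ[ℝ] cliffMonomial (⇑b) t) := by
      rw [← hz, map_sum]
      refine Finset.sum_congr rfl fun t _ => ?_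
      rw [TensorProduct.smul_tmul', smul_eq_mul, mul_one, hc,
        TensorProduct.smul_tmul', smul_eq_mul, mul_one]
    have hgcs : gC (c s) s = ∑ t, (Complex.normSq (z t) : ℂ) := by
      rw [hcs]
      conv_lhs => rw [← hz]
      rw [map_sum]
      refine Finset.sum_congr rfl fun t _ => ?_
      simp only [map_smul, map_sum, LinearMap.sum_apply, LinearMap.smul_apply, smul_eq_mul, hval]
      rw [Finset.sum_eq_single t (fun t' _ hne => by rw [if_neg hne, mul_zero])
        (fun habs => absurd (Finset.mem_univ t) habs), if_pos rfl, mul_one, mul_comm,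
        ← Complex.normSq_eq_conj_mul_self]
    rw [hh, hgcs]
    have : (∑ t, (Complex.normSq (z t) : ℂ)).re = ∑ t, Complex.normSq (z t) := by
      rw [Complex.re_sum]
      exact Finset.sum_congr rfl fun t _ => Complex.ofReal_re _
    rw [this]
    have hex : ∃ t, z t ≠ 0 := by
      by_contra hall
      push_neg at hall
      apply hs
      rw [← hz]
      simp [hall]
    obtain ⟨t0, ht0⟩ := hex
    refine Finset.sum_pos' (fun t _ => Complex.normSq_nonneg _) ⟨t0, Finset.mem_univ t0, ?_⟩
    exact Complex.normSq_pos.mpr ht0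
  · -- skew-symmetry of ρ(x)
    intro x s t
    rw [hh, hh, c_mulL x s, gC_skewL x (c s) t]
    rw [Complex.neg_re]
  · -- skew-symmetry of ρ(x̃)
    intro x s t
    rw [hh, hh, c_smulI, c_mulR, c_alpha, map_neg, map_smul, LinearMap.neg_apply,
      LinearMap.smul_apply, gC_symmM x (c s) t, map_smul, smul_eq_mul]
    rw [Complex.neg_re]
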